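/- arXiv:1107.3396 — 2 statements merged into one kernel-verified Lean document; each statement's English description precedes it below -/
import Mathlib

section
/- Let C, D, E be chain complexes of abelian groups indexed by the natural numbers, and let (f, g, h): C ⇒ D and (f', g', h'): D ⇒ E be reductions. Then the triple (f' ∘ f, g ∘ g', h + g ∘ h' ∘ f) is a reduction from C to E. -/
open CategoryTheory

/-- A *reduction* `ρ = (f, g, h)` between chain complexes of abelian groups `C` and `D`
indexed by the natural numbers: `f : C → D` and `g : D → C` are chain maps and
`h` is a homotopy operator `hₙ : Cₙ → Cₙ₊₁`, satisfying `f ∘ g = id_D`,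
`d_C ∘ h + h ∘ d_C = id_C − g ∘ f`, `f ∘ h = 0`, `h ∘ g = 0` and `h ∘ h = 0`.
(Composition is written in diagrammatic order `≫`.) -/
structure IsReduction (C D : ChainComplex AddCommGrpCat ℕ) (f : C ⟶ D) (g : D ⟶ C)
    (h : ∀ n, C.X n ⟶ C.X (n + 1)) : Prop where
  /-- `f ∘ g = id_D` -/
  fg : g ≫ f = 𝟙 D
  /-- `d_C ∘ h + h ∘ d_C = id_C − g ∘ f` in degree `0` (where `h₋₁ = 0`) -/
  homotopy_zero : h 0 ≫ C.d 1 0 = 𝟙 (C.X 0) - f.f 0 ≫ g.f 0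
  /-- `d_C ∘ h + h ∘ d_C = id_C − g ∘ f` in degree `n + 1` -/
  homotopy_succ : ∀ n, h (n + 1) ≫ C.d (n + 2) (n + 1) + C.d (n + 1) n ≫ h n =
    𝟙 (C.X (n + 1)) - f.f (n + 1) ≫ g.f (n + 1)
  /-- `f ∘ h = 0` -/
  fh : ∀ n, h n ≫ f.f (n + 1) = 0
  /-- `h ∘ g = 0` -/
  hg : ∀ n, g.f n ≫ h n = 0
  /-- `h ∘ h = 0` -/
  hh : ∀ n, h n ≫ h (n + 1) = 0


/-- If `(f, g, h) : C ⇒ D` and `(f', g', h') : D ⇒ E` are reductions, then the composite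
triple `(f' ∘ f, g ∘ g', h + g ∘ h' ∘ f)` is a reduction from `C` to `E`. -/
theorem reduction_comp (C D E : ChainComplex AddCommGrpCat ℕ)
    (f : C ⟶ D) (g : D ⟶ C) (h : ∀ n, C.X n ⟶ C.X (n + 1))
    (f' : D ⟶ E) (g' : E ⟶ D) (h' : ∀ n, D.X n ⟶ D.X (n + 1))
    (ρ : IsReduction C D f g h) (ρ' : IsReduction D E f' g' h') :
    IsReduction C E (f ≫ f') (g' ≫ g)
      (fun n => h n + f.f n ≫ h' n ≫ g.f (n + 1)) := by
  have hfg : ∀ n, g.f n ≫ f.f n = 𝟙 (D.X n) := fun n => by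
    have := congrArg (fun φ => HomologicalComplex.Hom.f φ n) ρ.fg
    simpa using this
  have hcomm : ∀ i j, f.f i ≫ D.d i j = C.d i j ≫ f.f j := fun i j => (f.comm i j)
  have gcomm : ∀ i j, g.f i ≫ C.d i j = D.d i j ≫ g.f j := fun i j => (g.comm i j)
  constructor
  · rw [Category.assoc, ← Category.assoc g f, ρ.fg, Category.id_comp, ρ'.fg]
  · simp only [Preadditive.add_comp, Category.assoc, gcomm 1 0, ρ.homotopy_zero,
      HomologicalComplex.comp_f, Category.comp_id, Category.id_comp]
    rw [← Category.assoc (h' 0), ρ'.homotopy_zero]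
    simp only [Preadditive.sub_comp, Preadditive.comp_sub, Category.id_comp, Category.assoc]
    abel
  · intro n
    simp only [Preadditive.add_comp, Preadditive.comp_add, Category.assoc, gcomm (n+2) (n+1)]
    rw [show C.d (n+1) n ≫ f.f n ≫ h' n ≫ g.f (n+1) =
        f.f (n+1) ≫ (D.d (n+1) n ≫ h' n) ≫ g.f (n+1) by
      rw [← Category.assoc, ← hcomm]; simp [Category.assoc]]
    have key : f.f (n+1) ≫ (h' (n+1) ≫ D.d (n+2) (n+1)) ≫ g.f (n+1)
        + f.f (n+1) ≫ (D.d (n+1) n ≫ h' n) ≫ g.f (n+1)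
        = f.f (n+1) ≫ g.f (n+1) - f.f (n+1) ≫ (f'.f (n+1) ≫ g'.f (n+1)) ≫ g.f (n+1) := by
      rw [← Preadditive.comp_add, ← Preadditive.add_comp, ρ'.homotopy_succ n]
      simp [Preadditive.sub_comp, Preadditive.comp_sub]
    simp only [Category.assoc] at key ⊢
    rw [show h (n+1) ≫ C.d (n+2) (n+1) + f.f (n+1) ≫ h' (n+1) ≫ D.d (n+2) (n+1) ≫ g.f (n+1)
        + (C.d (n+1) n ≫ h n + f.f (n+1) ≫ D.d (n+1) n ≫ h' n ≫ g.f (n+1))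
        = (h (n+1) ≫ C.d (n+2) (n+1) + C.d (n+1) n ≫ h n)
        + (f.f (n+1) ≫ h' (n+1) ≫ D.d (n+2) (n+1) ≫ g.f (n+1)
          + f.f (n+1) ≫ D.d (n+1) n ≫ h' n ≫ g.f (n+1)) by abel]
    rw [ρ.homotopy_succ n, key]
    simp only [HomologicalComplex.comp_f, Category.assoc]
    abel
  · intro n
    simp only [HomologicalComplex.comp_f, Preadditive.add_comp, Category.assoc]
    rw [reassoc_of% (ρ.fh n), ← Category.assoc (g.f (n+1)) (f.f (n+1)), hfg,
      Category.id_comp, ρ'.fh n]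
    simp
  · intro n
    simp only [HomologicalComplex.comp_f, Preadditive.comp_add, Category.assoc]
    rw [ρ.hg n, ← Category.assoc (g.f n) (f.f n), hfg, Category.id_comp,
      reassoc_of% (ρ'.hg n)]
    simp
  · intro n
    simp only [Preadditive.add_comp, Preadditive.comp_add, Category.assoc]
    rw [ρ.hh n, reassoc_of% (ρ.fh n), ρ.hg (n+1),
      ← Category.assoc (g.f (n+1)) (f.f (n+1)), hfg, Category.id_comp,
      reassoc_of% (ρ'.hh n)]
    simp
end

section
/- Let E be a group, A a subgroup of the center of E, and π: E → G the quotient homomorphism onto G = E/A. Then there exists a 2-cocycle f: G × G → A (i.e., a map satisfying f(g,1) = 0 = f(1,g) and f(gh, k) + f(g, h) = f(h, k) + f(g, hk) for all g, h, k ∈ G) together with a group isomorphism φ: A ×_f G → E such that φ(a, 1) = a for all a ∈ A and π(φ(a, g)) = g for all (a, g); that is, every central extension of G by A is equivalent to one of the form 0 → A → A ×_f G → G → 1. -/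
/-- Let `E` be a group, `A` a subgroup of the center of `E` and `π : E → G = E/A` the
quotient map.  Then there is a 2-cocycle `f : G × G → A` (written multiplicatively:
`f (g, 1) = 1 = f (1, g)` and `f (g·h, k) · f (g, h) = f (h, k) · f (g, h·k)`) together
with a group isomorphism `φ : A ×_f G ≃ E` — where `A ×_f G` is `A × G` with
multiplication `(a₁, g₁)·(a₂, g₂) = (a₁·a₂·f (g₁, g₂), g₁·g₂)` — such that
`φ (a, 1) = a` and `π (φ (a, g)) = g`.  That is, every central extension of `G` by `A`
is equivalent to one of the form `0 → A → A ×_f G → G → 1`. -/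
theorem central_extension_is_cocycle_extension (E : Type) [Group E] (A : Subgroup E)
    (hA : A ≤ Subgroup.center E) :
    haveI : A.Normal := ⟨fun n hn g => by
      have hgn : g * n * g⁻¹ = n := by
        rw [Subgroup.mem_center_iff.mp (hA hn) g, mul_assoc, mul_inv_cancel, mul_one]
      rw [hgn]; exact hn⟩
    ∃ f : (E ⧸ A) → (E ⧸ A) → A,
      (∀ g : E ⧸ A, f g 1 = 1) ∧
      (∀ g : E ⧸ A, f 1 g = 1) ∧
      (∀ g h k : E ⧸ A, f (g * h) k * f g h = f h k * f g (h * k)) ∧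
      ∃ φ : A × (E ⧸ A) → E,
        Function.Bijective φ ∧
        (∀ p q : A × (E ⧸ A),
          φ (p.1 * q.1 * f p.2 q.2, p.2 * q.2) = φ p * φ q) ∧
        (∀ a : A, φ (a, 1) = (a : E)) ∧
        (∀ p : A × (E ⧸ A), (QuotientGroup.mk (φ p) : E ⧸ A) = p.2) := by
  classical
  haveI : A.Normal := ⟨fun n hn g => by
      have hgn : g * n * g⁻¹ = n := by
        rw [Subgroup.mem_center_iff.mp (hA hn) g, mul_assoc, mul_inv_cancel, mul_one]
      rw [hgn]; exact hn⟩
  set s : (E ⧸ A) → E := fun g => if g = 1 then 1 else g.out with hsdef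
  have hs : ∀ g : E ⧸ A, QuotientGroup.mk (s g) = g := by
    intro g
    by_cases h : g = 1
    · simp [s, h]
    · simp [s, h, QuotientGroup.out_eq']
  have hs1 : s 1 = 1 := by simp [s]
  have hc : ∀ (a : E), a ∈ A → ∀ e : E, a * e = e * a :=
    fun a ha e => (Subgroup.mem_center_iff.mp (hA ha) e).symm
  have hmem : ∀ g h : E ⧸ A, s g * s h * (s (g * h))⁻¹ ∈ A := by
    intro g h
    rw [← QuotientGroup.eq_one_iff]
    simp only [QuotientGroup.mk_mul, QuotientGroup.mk_inv, hs]
    group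
  refine ⟨fun g h => ⟨s g * s h * (s (g * h))⁻¹, hmem g h⟩, ?_, ?_, ?_, ?_⟩
  · intro g; ext; simp [hs1]
  · intro g; ext; simp [hs1]
  · intro g h k
    ext
    simp only [Subgroup.coe_mul]
    have h1 := hmem g h
    have h2 := hmem h k
    calc s (g * h) * s k * (s (g * h * k))⁻¹ * (s g * s h * (s (g * h))⁻¹)
        = s g * s h * (s (g * h))⁻¹ * (s (g * h) * s k * (s (g * h * k))⁻¹) := by
          rw [hc _ h1]
      _ = s g * (s h * s k * (s (h * k))⁻¹) * (s (h * k) * (s (g * (h * k)))⁻¹) := by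
          rw [mul_assoc g h k]; group
      _ = s h * s k * (s (h * k))⁻¹ * (s g * (s (h * k) * (s (g * (h * k)))⁻¹)) := by
          rw [← mul_assoc, ← hc _ h2]; group
      _ = s h * s k * (s (h * k))⁻¹ * (s g * s (h * k) * (s (g * (h * k)))⁻¹) := by
          group
  · refine ⟨fun p => (p.1 : E) * s p.2, ⟨?_, ?_⟩, ?_, ?_, ?_⟩
    · rintro ⟨a, g⟩ ⟨b, h⟩ hab
      simp only at hab
      have hgh : g = h := by
        have := congrArg (QuotientGroup.mk (s := A)) hab
        simpa [hs, (QuotientGroup.eq_one_iff _).mpr a.2,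
          (QuotientGroup.eq_one_iff _).mpr b.2] using this
      subst hgh
      have hab2 : (a : E) = b := mul_right_cancel hab
      simp [Subtype.ext hab2]
    · intro e
      refine ⟨⟨⟨e * (s (QuotientGroup.mk e))⁻¹, ?_⟩, QuotientGroup.mk e⟩, ?_⟩
      · rw [← QuotientGroup.eq_one_iff]; simp [hs]
      · simp
    · rintro ⟨a, g⟩ ⟨b, h⟩
      simp only [Subgroup.coe_mul]
      have hcb : (b : E) * s g = s g * b := hc _ b.2 (s g)
      calc (a : E) * b * (s g * s h * (s (g * h))⁻¹) * s (g * h)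
          = (a : E) * ((b : E) * s g) * s h := by group
        _ = (a : E) * s g * ((b : E) * s h) := by rw [hcb]; group
    · intro a; simp [hs1]
    · rintro ⟨a, g⟩
      simp [hs, (QuotientGroup.eq_one_iff _).mpr a.2]
end
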